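/- For every n ≥ 1, the map ℂ^n → ℂ^n sending (z₁, ..., zₙ) to the tuple (e₁(z), ..., eₙ(z)) of its elementary symmetric polynomials (equivalently, to the non-leading coefficients of the monic polynomial ∏ᵢ (X − zᵢ)) is invariant under permutation of the zᵢ and descends to a homeomorphism SP^n(ℂ) ≃ ℂ^n between the n-th symmetric product of the complex plane and ℂ^n = (Fin n → ℂ). -/

import Mathlib

/-- The setoid on `Fin n → X` whose classes are orbits of the permutation action
of `Equiv.Perm (Fin n)`. -/
def SPSetoid (n : ℕ) (X : Type*) : Setoid (Fin n → X) where
  r f g := ∃ σ : Equiv.Perm (Fin n), f ∘ σ = g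
  iseqv := by
    constructor
    · exact fun f => ⟨Equiv.refl _, rfl⟩
    · rintro f g ⟨σ, rfl⟩
      exact ⟨σ.symm, by funext i; simp⟩
    · rintro f g h ⟨σ, rfl⟩ ⟨τ, rfl⟩
      exact ⟨τ.trans σ, by funext i; simp⟩

/-- The `n`-th symmetric product `SP^n(X) = X^n / S_n`, with the quotient topology. -/
def SP (n : ℕ) (X : Type*) [TopologicalSpace X] : Type _ :=
  Quotient (SPSetoid n X)

instance (n : ℕ) (X : Type*) [TopologicalSpace X] : TopologicalSpace (SP n X) :=
  inferInstanceAs (TopologicalSpace (Quotient (SPSetoid n X)))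


section Aux

open Polynomial List NNReal

lemma SPAux.exists_get_perm {α : Type*} {l₁ l₂ : List α} (h : l₁.Perm l₂) :
    ∃ σ : Fin l₂.length ≃ Fin l₁.length, ∀ i, l₂.get i = l₁.get (σ i) := by
  induction h with
  | nil => exact ⟨Equiv.refl _, fun i => i.elim0⟩
  | cons x h ih =>
    obtain ⟨σ, hσ⟩ := ih
    refine ⟨(finSuccEquiv _).trans ((Equiv.optionCongr σ).trans (finSuccEquiv _).symm),
      fun i => ?_⟩
    refine Fin.cases ?_ (fun j => ?_) i
    · simp
    · simpa using hσ j
  | swap x y l =>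
    refine ⟨Equiv.swap (0 : Fin (l.length + 2)) (1 : Fin (l.length + 2)), fun i => ?_⟩
    refine Fin.cases ?_ (fun j => ?_) (i : Fin (l.length + 2))
    · simp [Equiv.swap_apply_left]
    · refine Fin.cases ?_ (fun m => ?_) j
      · simp [Equiv.swap_apply_right]
      · have hs : (Equiv.swap (0 : Fin (l.length + 2)) 1) m.succ.succ = m.succ.succ :=
          Equiv.swap_apply_of_ne_of_ne (Fin.succ_ne_zero _)
            (fun hcon => Fin.succ_ne_zero m (Fin.succ_injective _ hcon))
        show (x :: y :: l).get (Fin.succ (Fin.succ m)) =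
          (y :: x :: l).get ((Equiv.swap (0 : Fin (l.length + 2)) 1) (Fin.succ (Fin.succ m)))
        rw [hs]
        rfl
  | trans h1 h2 ih1 ih2 =>
    obtain ⟨σ, hσ⟩ := ih1
    obtain ⟨τ, hτ⟩ := ih2
    exact ⟨τ.trans σ, fun i => by rw [hτ, hσ]; rfl⟩

lemma SPAux.exists_perm_comp {α : Type*} {n : ℕ} {f g : Fin n → α}
    (h : Multiset.map f Finset.univ.val = Multiset.map g Finset.univ.val) :
    ∃ σ : Equiv.Perm (Fin n), f ∘ σ = g := by
  rw [Fin.univ_val_map, Fin.univ_val_map, Multiset.coe_eq_coe] at h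
  obtain ⟨σ, hσ⟩ := SPAux.exists_get_perm h
  refine ⟨((finCongr (List.length_ofFn (f := g))).symm.trans σ).trans (finCongr (List.length_ofFn (f := f))),
    funext fun i => ?_⟩
  have := hσ ((finCongr (List.length_ofFn (f := g))).symm i)
  have h2 := this.symm
  simp [List.get_ofFn] at h2
  exact h2

namespace SPAux

variable {n : ℕ}

/-- The Vieta map sending a tuple to its elementary symmetric polynomials. -/
noncomputable def V (n : ℕ) (z : Fin n → ℂ) : Fin n → ℂ :=
  fun k => MvPolynomial.eval z (MvPolynomial.esymm (Fin n) ℂ (k + 1))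

lemma eval_esymm (z : Fin n → ℂ) (k : ℕ) :
    MvPolynomial.eval z (MvPolynomial.esymm (Fin n) ℂ k) =
      (Finset.univ.val.map z).esymm k := by
  rw [MvPolynomial.esymm, Finset.esymm_map_val, MvPolynomial.eval_sum]
  simp [MvPolynomial.eval_prod]

/-- The monic polynomial with roots `z`. -/
noncomputable def P (n : ℕ) (z : Fin n → ℂ) : ℂ[X] :=
  ((Finset.univ.val.map z).map fun r => X - C r).prod

lemma monic_P (z : Fin n → ℂ) : (P n z).Monic :=
  monic_multiset_prod_of_monic _ _ fun r _ => monic_X_sub_C r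

lemma card_mz (z : Fin n → ℂ) : Multiset.card (Finset.univ.val.map z) = n := by simp

lemma natDegree_P (z : Fin n → ℂ) : (P n z).natDegree = n := by
  rw [P, natDegree_multiset_prod_X_sub_C_eq_card, card_mz]

lemma roots_P (z : Fin n → ℂ) : (P n z).roots = Finset.univ.val.map z :=
  roots_multiset_prod_X_sub_C _

lemma coeff_P (z : Fin n → ℂ) {k : ℕ} (h : k ≤ n) :
    (P n z).coeff k = (-1) ^ (n - k) * (Finset.univ.val.map z).esymm (n - k) := by
  have := Multiset.prod_X_sub_C_coeff (Finset.univ.val.map z) (k := k) (by rw [card_mz]; exact h)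
  rwa [card_mz] at this

lemma coeff_P_eq_V (z : Fin n → ℂ) {k : ℕ} (h : k < n) :
    (P n z).coeff k = (-1) ^ (n - k) * V n z ⟨n - k - 1, by omega⟩ := by
  rw [coeff_P z h.le, V, eval_esymm]
  congr 2
  simp only []
  omega

lemma V_eq_coeff (z : Fin n → ℂ) (k : Fin n) :
    V n z k = (-1) ^ ((k : ℕ) + 1) * (P n z).coeff (n - ((k : ℕ) + 1)) := by
  have hk1 : n - (n - ((k : ℕ) + 1)) = (k : ℕ) + 1 := by omega
  rw [coeff_P z (Nat.sub_le _ _), hk1, V, eval_esymm, ← mul_assoc, ← pow_add,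
    show ((k : ℕ) + 1) + ((k : ℕ) + 1) = 2 * ((k : ℕ) + 1) by ring, pow_mul]
  norm_num

lemma multiset_eq_of_V_eq {z w : Fin n → ℂ} (h : V n z = V n w) :
    Finset.univ.val.map z = Finset.univ.val.map w := by
  have hP : P n z = P n w := by
    ext k
    rcases lt_trichotomy k n with hk | rfl | hk
    · rw [coeff_P_eq_V z hk, coeff_P_eq_V w hk, h]
    · have h1 := (monic_P z).coeff_natDegree
      have h2 := (monic_P w).coeff_natDegree
      rw [natDegree_P] at h1 h2
      rw [h1, h2]
    · rw [coeff_eq_zero_of_natDegree_lt (by rw [natDegree_P]; exact hk),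
        coeff_eq_zero_of_natDegree_lt (by rw [natDegree_P]; exact hk)]
  rw [← roots_P z, ← roots_P w, hP]

lemma V_surjective (c : Fin n → ℂ) : ∃ z : Fin n → ℂ, V n z = c := by
  classical
  set b : Fin n → ℂ := fun i => (-1) ^ (n - (i : ℕ)) * c ⟨n - (i : ℕ) - 1, by omega⟩ with hb
  set q : ℂ[X] := X ^ n + ∑ i : Fin n, C (b i) * X ^ (i : ℕ) with hq
  have hmonic : q.Monic := monic_X_pow_add (degree_sum_fin_lt b)
  have hdeg : q.natDegree = n := by
    rw [hq]
    rw [natDegree_eq_of_degree_eq_some]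
    rw [degree_add_eq_left_of_degree_lt (by rw [degree_X_pow]; exact degree_sum_fin_lt b),
      degree_X_pow]
  have hcoeff : ∀ k (hk : k < n), q.coeff k = b ⟨k, hk⟩ := by
    intro k hk
    rw [hq, coeff_add, coeff_X_pow, if_neg (by omega), zero_add, finset_sum_coeff]
    simp only [coeff_C_mul, coeff_X_pow]
    rw [Finset.sum_eq_single (⟨k, hk⟩ : Fin n)]
    · simp
    · intro i _ hi
      rw [if_neg, mul_zero]
      intro hcon
      exact hi (Fin.ext hcon.symm)
    · simp
  have hcard : Multiset.card q.roots = q.natDegree :=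
    splits_iff_card_roots.mp (IsAlgClosed.splits q)
  set l := q.roots.toList with hl
  have hlen : l.length = n := by rw [hl, Multiset.length_toList, hcard, hdeg]
  set z : Fin n → ℂ := fun i => l.get (Fin.cast hlen.symm i) with hz
  have hmz : Finset.univ.val.map z = q.roots := by
    rw [Fin.univ_val_map]
    have : List.ofFn z = l := by
      refine List.ext_get (by simp [hlen]) (fun i h1 h2 => ?_)
      simp [hz, List.get_ofFn]
    rw [this, hl, Multiset.coe_toList]
  have hPq : P n z = q := by
    have := C_leadingCoeff_mul_prod_multiset_X_sub_C (p := q) (by rw [hcard])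
    rw [hmonic.leadingCoeff, map_one, one_mul] at this
    rw [P, hmz, this]
  refine ⟨z, funext fun k => ?_⟩
  have hn1 : n - ((k : ℕ) + 1) < n := by omega
  rw [V_eq_coeff, hPq, hcoeff _ hn1, hb]
  simp only []
  rw [← mul_assoc, ← pow_add,
    show ((k : ℕ) + 1) + (n - (n - ((k : ℕ) + 1))) = 2 * ((k : ℕ) + 1) by omega, pow_mul]
  norm_num
  congr 1
  apply Fin.ext
  simp
  omega

lemma V_comp_perm (z : Fin n → ℂ) (σ : Equiv.Perm (Fin n)) : V n (z ∘ σ) = V n z := by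
  have hm : Finset.univ.val.map (z ∘ σ) = Finset.univ.val.map z := by
    rw [Fin.univ_val_map, Fin.univ_val_map]
    exact Multiset.coe_eq_coe.mpr (σ.ofFn_comp_perm z)
  funext k
  simp only [V]
  rw [eval_esymm, eval_esymm, hm]

lemma continuous_V : Continuous (V n) :=
  continuous_pi fun k => MvPolynomial.continuous_eval (MvPolynomial.esymm (Fin n) ℂ (k + 1))

lemma isCompact_preimage_V {K : Set (Fin n → ℂ)} (hK : IsCompact K) :
    IsCompact (V n ⁻¹' K) := by
  obtain ⟨r, hr⟩ := hK.isBounded.subset_closedBall 0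
  have hsub : V n ⁻¹' K ⊆ Metric.closedBall 0 (r + 1) := by
    intro z hz
    have hVz : ‖V n z‖ ≤ r := by
      have := hr hz
      rwa [Metric.mem_closedBall, dist_zero_right] at this
    have hr0 : (0 : ℝ) ≤ r := le_trans (norm_nonneg _) hVz
    rw [Metric.mem_closedBall, dist_zero_right]
    refine (pi_norm_le_iff_of_nonneg (by linarith)).mpr fun i => ?_
    -- `z i` is a root of `P n z`
    have hroot : (P n z).IsRoot (z i) := by
      have hmem : z i ∈ (P n z).roots := by
        rw [roots_P]
        exact Multiset.mem_map.mpr ⟨i, Finset.mem_univ_val i, rfl⟩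
      exact (mem_roots (monic_P z).ne_zero).mp hmem
    have hlt := hroot.norm_lt_cauchyBound (monic_P z).ne_zero
    have hcb : ((P n z).cauchyBound : ℝ) ≤ r + 1 := by
      rw [cauchyBound, (monic_P z).leadingCoeff]
      push_cast
      have hsup : (Finset.sup (Finset.range (P n z).natDegree) (‖(P n z).coeff ·‖₊) : ℝ≥0) ≤
          ‖V n z‖₊ := by
        refine Finset.sup_le fun k hk => ?_
        rw [Finset.mem_range, natDegree_P] at hk
        rw [coeff_P_eq_V z hk]
        have : ‖((-1 : ℂ) ^ (n - k) * V n z ⟨n - k - 1, by omega⟩)‖₊ =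
            ‖V n z ⟨n - k - 1, by omega⟩‖₊ := by
          simp [nnnorm_mul]
        rw [this]
        exact nnnorm_le_pi_nnnorm (V n z) _
      rw [norm_one, div_one]
      have : ((Finset.sup (Finset.range (P n z).natDegree) (‖(P n z).coeff ·‖₊) : ℝ≥0) : ℝ) ≤
          ‖V n z‖ := by
        rw [← coe_nnnorm]
        exact_mod_cast hsup
      linarith
    have : ‖z i‖ < ((P n z).cauchyBound : ℝ) := by
      rw [← coe_nnnorm]
      exact_mod_cast hlt
    linarith
  exact (isCompact_closedBall 0 (r + 1)).of_isClosed_subset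
    (hK.isClosed.preimage continuous_V) hsub

lemma isProperMap_V : IsProperMap (V n) :=
  isProperMap_iff_isCompact_preimage.mpr ⟨continuous_V, fun _ hK => isCompact_preimage_V hK⟩

end SPAux

end Aux

/-- The map sending `(z₁, …, zₙ)` to its elementary symmetric polynomials
`(e₁(z), …, eₙ(z))` is permutation invariant and descends to a homeomorphism
`SP^n(ℂ) ≃ ℂ^n`. -/
theorem SP_complex_homeomorph (n : ℕ) (hn : 1 ≤ n) :
    (∀ (z : Fin n → ℂ) (σ : Equiv.Perm (Fin n)) (k : Fin n),
        MvPolynomial.eval (z ∘ σ) (MvPolynomial.esymm (Fin n) ℂ (k + 1)) =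
          MvPolynomial.eval z (MvPolynomial.esymm (Fin n) ℂ (k + 1))) ∧
    ∃ h : SP n ℂ ≃ₜ (Fin n → ℂ),
      ∀ z : Fin n → ℂ,
        h (Quotient.mk (SPSetoid n ℂ) z) =
          fun k : Fin n => MvPolynomial.eval z (MvPolynomial.esymm (Fin n) ℂ (k + 1)) := by
  constructor
  · intro z σ k
    exact congrFun (SPAux.V_comp_perm z σ) k
  · letI : Setoid (Fin n → ℂ) := SPSetoid n ℂ
    have hlift : ∀ a b : Fin n → ℂ, a ≈ b → SPAux.V n a = SPAux.V n b := by
      rintro a b ⟨σ, rfl⟩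
      exact (SPAux.V_comp_perm a σ).symm
    let Vbar : SP n ℂ → (Fin n → ℂ) := Quotient.lift (SPAux.V n) hlift
    have hVbar_mk : ∀ z : Fin n → ℂ, Vbar (Quotient.mk (SPSetoid n ℂ) z) = SPAux.V n z :=
      fun z => rfl
    have hbij : Function.Bijective Vbar := by
      constructor
      · rintro ⟨a⟩ ⟨b⟩ hab
        refine Quotient.sound ?_
        exact SPAux.exists_perm_comp (SPAux.multiset_eq_of_V_eq hab)
      · intro c
        obtain ⟨z, hz⟩ := SPAux.V_surjective c
        exact ⟨Quotient.mk _ z, hz⟩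
    have hcont : Continuous Vbar := SPAux.continuous_V.quotient_lift hlift
    have hclosed : IsClosedMap Vbar := by
      intro C hC
      have himg : Vbar '' C = SPAux.V n '' (Quotient.mk (SPSetoid n ℂ) ⁻¹' C) := by
        ext y
        constructor
        · rintro ⟨x, hx, rfl⟩
          obtain ⟨a, rfl⟩ := Quotient.mk_surjective (s := SPSetoid n ℂ) x
          exact ⟨a, hx, rfl⟩
        · rintro ⟨z, hz, rfl⟩
          exact ⟨_, hz, rfl⟩
      rw [himg]
      exact SPAux.isProperMap_V.isClosedMap _ (hC.preimage continuous_quotient_mk')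
    have hopen : IsOpenMap Vbar := by
      intro U hU
      rw [← isClosed_compl_iff, ← Set.image_compl_eq hbij]
      exact hclosed _ hU.isClosed_compl
    exact ⟨(Equiv.ofBijective Vbar hbij).toHomeomorphOfContinuousOpen hcont hopen,
      fun z => rfl⟩
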